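/- Atomic swap fairness in the two-party HTLC model: if party A can redeem on chain 2 only by revealing the preimage x of the hashlock, and any revelation of x enables B to redeem on chain 1 before B's timelock expires, then in every complete execution either both parties obtain their agreed amounts or (after both timelocks expire without revelation) both recover their original deposits; no execution ends with exactly one party holding both amounts, assuming both parties follow the protocol's enabled moves and timelocks satisfy T_A > T_B > (time of any revelation). -/
import Mathlib


/-- State of the two-party HTLC atomic swap: deposits on the two chains,
whether the preimage has been revealed, redemptions, refunds, and a clock. -/
structure SwapState where
  deposited1 : Bool
  deposited2 : Bool
  revealed : Bool
  redeemed1 : Bool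
  redeemed2 : Bool
  refunded1 : Bool
  refunded2 : Bool
  clock : ℕ

/-- Transitions of the HTLC pair with timelocks `TA` (chain 1) and `TB`
(chain 2). A redeems on chain 2 by revealing the preimage before `TB`; B
redeems on chain 1 once the preimage is revealed, before `TA`; refunds are
enabled after the respective timelock when no redemption happened. Honesty of
B is reflected in the guard of `refund1`: B redeems whenever enabled before
`TA`, so chain 1 is refunded only if the preimage was never revealed. -/
inductive SwapStep (TA TB : ℕ) : SwapState → SwapState → Prop
  | tick (s : SwapState) :
      SwapStep TA TB s { s with clock := s.clock + 1 }
  | revealRedeem2 (s : SwapState)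
      (h : s.deposited2 = true ∧ s.clock < TB) :
      SwapStep TA TB s { s with revealed := true, redeemed2 := true }
  | redeem1 (s : SwapState)
      (h : s.revealed = true ∧ s.clock < TA) :
      SwapStep TA TB s { s with redeemed1 := true }
  | refund1 (s : SwapState)
      (h : TA ≤ s.clock ∧ s.redeemed1 = false ∧ s.revealed = false) :
      SwapStep TA TB s { s with refunded1 := true }
  | refund2 (s : SwapState)
      (h : TB ≤ s.clock ∧ s.redeemed2 = false) :
      SwapStep TA TB s { s with refunded2 := true }

/-- Atomic swap fairness (safety): with `TB < TA`, in no reachable state does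
one party hold both amounts — it is impossible that A redeemed on chain 2
while chain 1 was refunded, and impossible that B redeemed on chain 1 while
chain 2 was refunded. -/

def SwapInv (TA TB : ℕ) (s : SwapState) : Prop :=
  (s.revealed = s.redeemed2) ∧
  (s.redeemed1 = true → s.revealed = true) ∧
  (s.refunded1 = true → s.revealed = false ∧ TA ≤ s.clock) ∧
  (s.refunded2 = true → s.redeemed2 = false ∧ TB ≤ s.clock)

theorem swap_inv (TA TB : ℕ) (hT : TB < TA) (s : SwapState)
    (hreach : Relation.ReflTransGen (SwapStep TA TB)
      ⟨true, true, false, false, false, false, false, 0⟩ s) :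
    SwapInv TA TB s := by
  induction hreach with
  | refl => simp [SwapInv]
  | tail hr hstep ih =>
    obtain ⟨i1, i2, i3, i4⟩ := ih
    cases hstep with
    | tick =>
      exact ⟨i1, i2, fun h => ⟨(i3 h).1, le_trans (i3 h).2 (Nat.le_succ _)⟩,
        fun h => ⟨(i4 h).1, le_trans (i4 h).2 (Nat.le_succ _)⟩⟩
    | revealRedeem2 h =>
      exact ⟨rfl, fun _ => rfl,
        fun h1 => absurd h.2 (not_lt.2 (le_trans hT.le (i3 h1).2)),
        fun h1 => absurd h.2 (not_lt.2 (i4 h1).2)⟩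
    | redeem1 h =>
      exact ⟨i1, fun _ => h.1,
        fun h1 => absurd h.1 (by simp [(i3 h1).1]), i4⟩
    | refund1 h => exact ⟨i1, i2, fun _ => ⟨h.2.2, h.1⟩, i4⟩
    | refund2 h => exact ⟨i1, i2, i3, fun _ => ⟨h.2, h.1⟩⟩

/-- Atomic swap fairness (safety): with `TB < TA`, in no reachable state does
one party hold both amounts — it is impossible that A redeemed on chain 2
while chain 1 was refunded, and impossible that B redeemed on chain 1 while
chain 2 was refunded. -/
theorem swap_fairness (TA TB : ℕ) (hT : TB < TA) (s : SwapState)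
    (hreach : Relation.ReflTransGen (SwapStep TA TB)
      ⟨true, true, false, false, false, false, false, 0⟩ s) :
    ¬(s.redeemed2 = true ∧ s.refunded1 = true) ∧
    ¬(s.redeemed1 = true ∧ s.refunded2 = true) := by
  obtain ⟨i1, i2, i3, i4⟩ := swap_inv TA TB hT s hreach
  constructor
  · rintro ⟨h2, h1⟩
    rw [h2] at i1
    rw [i1] at i3
    simp at i3
    exact absurd h1 (by simp [i3])
  · rintro ⟨h1, h2⟩
    have hv := i2 h1
    rw [hv] at i1
    exact absurd i1.symm (by simp [(i4 h2).1])
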